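/- There exists a unique continuously differentiable function f̄ : [0,T] → ℝ such that for every t ∈ [0,T], f̄(t)·γ₀·H̄₂[f̄](t) = H̄₁[f̄](t) + γ₀·(H̄₁[f̄](t)² − H̄₂[f̄](t)); note that the denominator γ₀·H̄₂[f̄](t) is automatically strictly positive. (Corollary 3: the equation system (45) characterizing the equilibrium investment strategy of the ambiguity-neutral mean-variance investor without skewness preference, i.e. the case ξ = 0 and φ₀ = 0 of Theorem 4.1, recovering Theorem 4.6 of Björk, Murgoci and Zhou.) -/

import Mathlib

open MeasureTheory Set

namespace MVAux

lemma exp_lip {c x y : ℝ} (hx : x ≤ c) (hy : y ≤ c) :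
    |Real.exp x - Real.exp y| ≤ Real.exp c * |x - y| := by
  wlog h : y ≤ x generalizing x y
  · rw [abs_sub_comm, abs_sub_comm x y]; exact this hy hx (le_of_not_ge h)
  rw [abs_of_nonneg (sub_nonneg.2 (Real.exp_le_exp.2 h)), abs_of_nonneg (sub_nonneg.2 h)]
  have h1 : Real.exp x - Real.exp y = Real.exp x * (1 - Real.exp (y - x)) := by
    rw [mul_sub, mul_one, ← Real.exp_add]; ring_nf
  have h2 := Real.add_one_le_exp (y - x)
  have h3 : Real.exp x ≤ Real.exp c := Real.exp_le_exp.2 hx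
  have h4 : Real.exp (y - x) ≤ 1 := Real.exp_le_one_iff.2 (by linarith)
  nlinarith [Real.exp_pos x, Real.exp_pos c]

noncomputable def cl (a b x : ℝ) : ℝ := max a (min b x)

lemma le_cl (a b x : ℝ) : a ≤ cl a b x := le_max_left _ _

lemma cl_le {a b : ℝ} (hab : a ≤ b) (x : ℝ) : cl a b x ≤ b :=
  max_le hab (min_le_left _ _)

lemma cl_eq {a b x : ℝ} (ha : a ≤ x) (hb : x ≤ b) : cl a b x = x := by
  rw [cl, min_eq_right hb, max_eq_right ha]

lemma cl_lip (a b x y : ℝ) : |cl a b x - cl a b y| ≤ |x - y| := by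
  have h1 : |cl a b x - cl a b y| ≤ |min b x - min b y| := by
    rw [cl, cl, max_comm a _, max_comm a _]
    exact abs_max_sub_max_le_abs _ _ _
  refine h1.trans ?_
  have := abs_min_sub_min_le_max b x b y
  simpa using this

lemma cl_continuous (a b : ℝ) : Continuous (cl a b) := by
  unfold cl; fun_prop

lemma contDiffOn_of_hasDerivWithinAt {φ ψ : ℝ → ℝ} {a b : ℝ} (hab : a < b)
    (h : ∀ t ∈ Icc a b, HasDerivWithinAt φ (ψ t) (Icc a b) t)
    (hψ : ContinuousOn ψ (Icc a b)) : ContDiffOn ℝ 1 φ (Icc a b) := by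
  have hu : UniqueDiffOn ℝ (Icc a b) := uniqueDiffOn_Icc hab
  rw [show (1 : WithTop ℕ∞) = 0 + 1 from rfl, contDiffOn_succ_iff_derivWithin hu]
  refine ⟨fun t ht => (h t ht).differentiableWithinAt, by simp, ?_⟩
  rw [contDiffOn_zero]
  exact hψ.congr fun t ht => (h t ht).derivWithin (hu t ht)

lemma eq_integral_of_hasDerivWithinAt {φ h : ℝ → ℝ} {a b : ℝ} (hab : a < b)
    (hh : ContinuousOn h (Icc a b))
    (hφ : ∀ t ∈ Icc a b, HasDerivWithinAt φ (-h t) (Icc a b) t)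
    (hb : φ b = 0) : ∀ t ∈ Icc a b, φ t = ∫ s in t..b, h s := by
  intro t ht
  have hcont : ContinuousOn φ (Icc a b) := fun s hs => (hφ s hs).continuousWithinAt
  have key : ∫ s in t..b, h s = (-φ) b - (-φ) t := by
    apply intervalIntegral.integral_eq_sub_of_hasDeriv_right_of_le ht.2
    · exact (hcont.mono (Icc_subset_Icc ht.1 le_rfl)).neg
    · intro x hx
      have hx' : x ∈ Ioo a b := ⟨lt_of_le_of_lt ht.1 hx.1, hx.2⟩
      have : HasDerivAt φ (-h x) x :=
        (hφ x (Ioo_subset_Icc_self hx')).hasDerivAt (Icc_mem_nhds hx'.1 hx'.2)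
      simpa using this.neg.hasDerivWithinAt
    · exact (hh.mono (Icc_subset_Icc ht.1 le_rfl)).intervalIntegrable_of_Icc ht.2
  simp only [Pi.neg_apply, hb, neg_zero, zero_sub, neg_neg] at key
  exact key.symm

lemma hasDerivAt_integral_left {h : ℝ → ℝ} (hh : Continuous h) (b t : ℝ) :
    HasDerivAt (fun u => ∫ s in u..b, h s) (-h t) t :=
  (intervalIntegral.integral_hasStrictDerivAt_left (hh.intervalIntegrable _ _)
    (hh.stronglyMeasurableAtFilter _ _) hh.continuousAt).hasDerivAt

lemma key_algebra (γ₀ x y : ℝ) (hγ : γ₀ ≠ 0) :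
    (γ₀⁻¹ * Real.exp (-x - y) + Real.exp (-y) - 1) * (γ₀ * Real.exp (2 * x + y))
      = Real.exp x + γ₀ * (Real.exp x ^ 2 - Real.exp (2 * x + y)) := by
  have e1 : Real.exp (-x - y) = (Real.exp x * Real.exp y)⁻¹ := by
    rw [← Real.exp_add, ← Real.exp_neg]; congr 1; ring
  have e2 : Real.exp (-y) = (Real.exp y)⁻¹ := Real.exp_neg y
  have e3 : Real.exp (2 * x + y) = Real.exp x * Real.exp x * Real.exp y := by
    rw [← Real.exp_add, ← Real.exp_add]; congr 1; ring
  rw [e1, e2, e3]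
  have hx := Real.exp_ne_zero x
  have hy := Real.exp_ne_zero y
  field_simp
  ring

end MVAux

/-- `H̄₁[f](t) = exp(∫_t^T (r(s) + Θ(s) f(s)) ds)`. -/
noncomputable def H1b (T : ℝ) (r Θ f : ℝ → ℝ) (t : ℝ) : ℝ :=
  Real.exp (∫ s in t..T, r s + Θ s * f s)

/-- `H̄₂[f](t) = exp(∫_t^T (2r(s) + 2Θ(s)f(s) + Θ(s)f(s)²) ds)`. -/
noncomputable def H2b (T : ℝ) (r Θ f : ℝ → ℝ) (t : ℝ) : ℝ :=
  Real.exp (∫ s in t..T, 2 * r s + 2 * Θ s * f s + Θ s * f s ^ 2)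

/-- `f` is a C¹ solution on `[0,T]` of the equation system (45) of the
ambiguity-neutral mean-variance investor without skewness preference. -/
def SolvesMVNIE (T γ₀ : ℝ) (r Θ f : ℝ → ℝ) : Prop :=
  ContDiffOn ℝ 1 f (Set.Icc 0 T) ∧
    ∀ t ∈ Set.Icc 0 T,
      f t * (γ₀ * H2b T r Θ f t) =
        H1b T r Θ f t + γ₀ * (H1b T r Θ f t ^ 2 - H2b T r Θ f t)

set_option maxHeartbeats 4000000 in
/-- Corollary 3: the equation system (45) characterizing the equilibrium
investment strategy of the ambiguity-neutral mean-variance investor without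
skewness preference (the case `ξ = 0` and `φ₀ = 0` of Theorem 4.1, recovering
Theorem 4.6 of Björk, Murgoci and Zhou) admits a unique C¹ solution on
`[0,T]`; moreover the denominator `γ₀ H̄₂[f](t)` is automatically strictly
positive. -/
theorem mean_variance_neutral_equation_unique_solution
    (T γ₀ : ℝ) (hT : 0 < T) (hγ : 0 < γ₀)
    (r Θ : ℝ → ℝ)
    (hrLip : ∃ K : NNReal, LipschitzOnWith K r (Set.Icc 0 T))
    (hΘLip : ∃ K : NNReal, LipschitzOnWith K Θ (Set.Icc 0 T))
    (hrBdd : ∃ C : ℝ, ∀ t ∈ Set.Icc 0 T, |r t| ≤ C)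
    (hΘBdd : ∃ C : ℝ, ∀ t ∈ Set.Icc 0 T, |Θ t| ≤ C)
    (hΘpos : ∀ t ∈ Set.Icc 0 T, 0 ≤ Θ t) :
    ∃ f : ℝ → ℝ, SolvesMVNIE T γ₀ r Θ f ∧
      (∀ t ∈ Set.Icc 0 T, 0 < γ₀ * H2b T r Θ f t) ∧
      ∀ g : ℝ → ℝ, SolvesMVNIE T γ₀ r Θ g → Set.EqOn f g (Set.Icc 0 T) := by
  classical
  obtain ⟨Cr, hCr⟩ := hrBdd
  obtain ⟨CΘ, hCΘ⟩ := hΘBdd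
  obtain ⟨Kr, hKr⟩ := hrLip
  obtain ⟨KΘ, hKΘ⟩ := hΘLip
  have hT0 : (0 : ℝ) ∈ Icc 0 T := ⟨le_rfl, hT.le⟩
  have hCr0 : 0 ≤ Cr := (abs_nonneg _).trans (hCr 0 hT0)
  have hCΘ0 : 0 ≤ CΘ := (abs_nonneg _).trans (hCΘ 0 hT0)
  have hrc : ContinuousOn r (Icc 0 T) := hKr.continuousOn
  have hΘc : ContinuousOn Θ (Icc 0 T) := hKΘ.continuousOn
  -- clamped time and coefficients
  set π : ℝ → ℝ := fun t => MVAux.cl 0 T t with hπdef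
  have hπc : Continuous π := MVAux.cl_continuous 0 T
  have hπmem : ∀ t, π t ∈ Icc 0 T := fun t => ⟨MVAux.le_cl 0 T t, MVAux.cl_le hT.le t⟩
  have hπeq : ∀ t ∈ Icc 0 T, π t = t := fun t ht => MVAux.cl_eq ht.1 ht.2
  set rb : ℝ → ℝ := fun t => r (π t) with hrbdef
  set Θb : ℝ → ℝ := fun t => Θ (π t) with hΘbdef
  have hrbc : Continuous rb := hrc.comp_continuous hπc hπmem
  have hΘbc : Continuous Θb := hΘc.comp_continuous hπc hπmem
  have hrb_bd : ∀ t, |rb t| ≤ Cr := fun t => hCr _ (hπmem t)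
  have hΘb_bd : ∀ t, |Θb t| ≤ CΘ := fun t => hCΘ _ (hπmem t)
  have hΘb_nn : ∀ t, 0 ≤ Θb t := fun t => hΘpos _ (hπmem t)
  have hΘb_ub : ∀ t, Θb t ≤ CΘ := fun t => (abs_le.1 (hΘb_bd t)).2
  have hrb_eq : ∀ t ∈ Icc 0 T, rb t = r t := fun t ht => by rw [hrbdef]; simp [hπeq t ht]
  have hΘb_eq : ∀ t ∈ Icc 0 T, Θb t = Θ t := fun t ht => by rw [hΘbdef]; simp [hπeq t ht]
  -- the (clamped) discount integral
  set Rb : ℝ → ℝ := fun t => ∫ s in (π t)..T, rb s with hRbdef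
  have hRb_bd : ∀ t, |Rb t| ≤ Cr * T := by
    intro t
    have h1 : ∀ x ∈ Set.uIoc (π t) T, ‖rb x‖ ≤ Cr := fun x _ => hrb_bd x
    have h2 := intervalIntegral.norm_integral_le_of_norm_le_const h1
    have h3 : |T - π t| ≤ T := by
      have := hπmem t
      rw [abs_of_nonneg (by linarith [this.2])]
      linarith [this.1]
    calc |Rb t| ≤ Cr * |T - π t| := h2
      _ ≤ Cr * T := by nlinarith
  have hRb_lb : ∀ t, -(Cr * T) ≤ Rb t := fun t => (abs_le.1 (hRb_bd t)).1
  have hRbc : Continuous Rb := by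
    have h1 : Continuous fun a => ∫ s in T..a, rb s :=
      intervalIntegral.continuous_primitive (fun a b => hrbc.intervalIntegrable a b) T
    have h2 : Continuous fun t => -∫ s in T..(π t), rb s := (h1.comp hπc).neg
    have : Rb = fun t => -∫ s in T..(π t), rb s := by
      funext t; rw [hRbdef]; exact intervalIntegral.integral_symm T (π t)
    rw [this]; exact h2
  -- constants
  set B : ℝ := CΘ * T with hBdef
  set M : ℝ := γ₀⁻¹ * Real.exp (Cr * T + B) with hMdef
  have hB0 : 0 ≤ B := by positivity
  have hM0 : 0 < M := by positivity
  set M2 : ℝ := max 1 M with hM2def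
  have hM21 : 1 ≤ M2 := le_max_left _ _
  have hM2M : M ≤ M2 := le_max_right _ _
  have hM20 : 0 < M2 := lt_of_lt_of_le one_pos hM21
  set A : ℝ := CΘ * T * M2 with hAdef
  set D : ℝ := CΘ * T * M2 ^ 2 with hDdef
  have hBA : -B ≤ A := by nlinarith
  have hD0 : (0 : ℝ) ≤ D := by positivity
  set cu : ℝ → ℝ := MVAux.cl (-B) A with hcudef
  set cv : ℝ → ℝ := MVAux.cl 0 D with hcvdef
  -- truncated vector field
  set F : ℝ → ℝ × ℝ → ℝ := fun t p =>
    γ₀⁻¹ * Real.exp (-(Rb t + cu p.1) - cv p.2) + Real.exp (-(cv p.2)) - 1 with hFdef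
  set V : ℝ → ℝ × ℝ → ℝ × ℝ := fun t p =>
    (-(Θb t * F t p), -(Θb t * F t p ^ 2)) with hVdef
  clear_value π rb Θb Rb M F V
  -- bounds on F
  have hexp_bd : ∀ t (p : ℝ × ℝ), -(Rb t + cu p.1) - cv p.2 ≤ Cr * T + B := by
    intro t p
    have h1 := hRb_lb t
    have h2 := MVAux.le_cl (-B) A p.1
    have h3 := MVAux.le_cl 0 D p.2
    linarith
  have hFub : ∀ t p, F t p ≤ M := by
    intro t p
    have h1 := Real.exp_le_exp.2 (hexp_bd t p)
    have h2 : Real.exp (-(cv p.2)) ≤ 1 :=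
      Real.exp_le_one_iff.2 (neg_nonpos.2 (MVAux.le_cl 0 D p.2))
    have h3 : (0:ℝ) < γ₀⁻¹ := by positivity
    rw [hFdef, hMdef]
    dsimp only
    nlinarith
  have hFlb : ∀ t p, -1 < F t p := by
    intro t p
    rw [hFdef]
    dsimp only
    have h1 := Real.exp_pos (-(Rb t + cu p.1) - cv p.2)
    have h2 := Real.exp_pos (-(cv p.2))
    have h3 : (0:ℝ) < γ₀⁻¹ := by positivity
    nlinarith
  have hFabs : ∀ t p, |F t p| ≤ M2 := by
    intro t p
    rw [abs_le]
    constructor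
    · linarith [hFlb t p]
    · linarith [hFub t p, hM2M]
  -- Lipschitz estimate for F
  set LF : ℝ := γ₀⁻¹ * Real.exp (Cr * T + B) * 2 + 1 with hLFdef
  have hLF0 : 0 < LF := by rw [hLFdef]; positivity
  clear_value LF
  have hFlip : ∀ t (p q : ℝ × ℝ), |F t p - F t q| ≤ LF * dist p q := by
    intro t p q
    have hd1 : |p.1 - q.1| ≤ dist p q := by
      rw [Prod.dist_eq, ← Real.dist_eq]; exact le_max_left _ _
    have hd2 : |p.2 - q.2| ≤ dist p q := by
      rw [Prod.dist_eq, ← Real.dist_eq]; exact le_max_right _ _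
    have hdnn : (0:ℝ) ≤ dist p q := dist_nonneg
    have e1 : |(-(Rb t + cu p.1) - cv p.2) - (-(Rb t + cu q.1) - cv q.2)| ≤ 2 * dist p q := by
      have h1 := MVAux.cl_lip (-B) A p.1 q.1
      have h2 := MVAux.cl_lip 0 D p.2 q.2
      have h3 : (-(Rb t + cu p.1) - cv p.2) - (-(Rb t + cu q.1) - cv q.2)
          = -((cu p.1 - cu q.1)) + -((cv p.2 - cv q.2)) := by rw [hcudef, hcvdef]; ring
      calc |(-(Rb t + cu p.1) - cv p.2) - (-(Rb t + cu q.1) - cv q.2)|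
          ≤ |cu p.1 - cu q.1| + |cv p.2 - cv q.2| := by
            rw [h3]; refine (abs_add_le _ _).trans ?_; rw [abs_neg, abs_neg]
        _ ≤ |p.1 - q.1| + |p.2 - q.2| := add_le_add h1 h2
        _ ≤ 2 * dist p q := by linarith
    have e2 : |(-(cv p.2)) - (-(cv q.2))| ≤ dist p q := by
      have h2 := MVAux.cl_lip 0 D p.2 q.2
      calc |(-(cv p.2)) - (-(cv q.2))| = |cv p.2 - cv q.2| := by
            rw [← abs_neg]; congr 1; ring
        _ ≤ |p.2 - q.2| := h2
        _ ≤ dist p q := hd2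
    have hE1 : |Real.exp (-(Rb t + cu p.1) - cv p.2) - Real.exp (-(Rb t + cu q.1) - cv q.2)|
        ≤ Real.exp (Cr * T + B) * (2 * dist p q) :=
      le_trans (MVAux.exp_lip (hexp_bd t p) (hexp_bd t q))
        (by have := e1; nlinarith [Real.exp_pos (Cr * T + B)])
    have hE2 : |Real.exp (-(cv p.2)) - Real.exp (-(cv q.2))| ≤ 1 * dist p q := by
      have hb1 : -(cv p.2) ≤ 0 := neg_nonpos.2 (MVAux.le_cl 0 D p.2)
      have hb2 : -(cv q.2) ≤ 0 := neg_nonpos.2 (MVAux.le_cl 0 D q.2)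
      have := MVAux.exp_lip hb1 hb2
      rw [Real.exp_zero] at this
      exact le_trans this (by nlinarith)
    have hsplit : F t p - F t q
        = γ₀⁻¹ * (Real.exp (-(Rb t + cu p.1) - cv p.2) - Real.exp (-(Rb t + cu q.1) - cv q.2))
          + (Real.exp (-(cv p.2)) - Real.exp (-(cv q.2))) := by
      rw [hFdef]; dsimp only; ring
    have h3 : (0:ℝ) < γ₀⁻¹ := by positivity
    calc |F t p - F t q|
        ≤ γ₀⁻¹ * |Real.exp (-(Rb t + cu p.1) - cv p.2) - Real.exp (-(Rb t + cu q.1) - cv q.2)|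
          + |Real.exp (-(cv p.2)) - Real.exp (-(cv q.2))| := by
          rw [hsplit]
          refine (abs_add_le _ _).trans ?_
          rw [abs_mul, abs_of_pos h3]
      _ ≤ γ₀⁻¹ * (Real.exp (Cr * T + B) * (2 * dist p q)) + 1 * dist p q := by
          have := hE1; have := hE2
          gcongr
      _ = LF * dist p q := by rw [hLFdef]; ring
  -- Lipschitz field
  set KV : ℝ := CΘ * LF * (2 * M2) with hKVdef
  have hKV0 : 0 ≤ KV := by rw [hKVdef]; positivity
  clear_value KV
  have hVlip : ∀ t, LipschitzWith KV.toNNReal (V t) := by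
    intro t
    apply LipschitzWith.of_dist_le_mul
    intro p q
    rw [Real.coe_toNNReal _ hKV0, Prod.dist_eq]
    have hF := hFlip t p q
    have hFa := hFabs t p
    have hFb := hFabs t q
    have hΘnn := hΘb_nn t
    have hΘub := hΘb_ub t
    have hdnn : (0:ℝ) ≤ dist p q := dist_nonneg
    apply max_le
    · rw [Real.dist_eq, hVdef]
      dsimp only
      have h1 : -(Θb t * F t p) - -(Θb t * F t q) = -(Θb t * (F t p - F t q)) := by ring
      rw [h1, abs_neg, abs_mul, abs_of_nonneg hΘnn]
      calc Θb t * |F t p - F t q| ≤ CΘ * (LF * dist p q) :=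
            mul_le_mul hΘub hF (abs_nonneg _) hCΘ0
        _ ≤ KV * dist p q := by
            rw [hKVdef]
            have hx : 0 ≤ CΘ * LF * dist p q :=
              mul_nonneg (mul_nonneg hCΘ0 hLF0.le) hdnn
            nlinarith [mul_nonneg hx (by linarith : (0:ℝ) ≤ 2 * M2 - 1)]
    · rw [Real.dist_eq, hVdef]
      dsimp only
      have h1 : -(Θb t * F t p ^ 2) - -(Θb t * F t q ^ 2)
          = -(Θb t * ((F t p - F t q) * (F t p + F t q))) := by ring
      rw [h1, abs_neg, abs_mul, abs_of_nonneg hΘnn, abs_mul]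
      have h2 : |F t p + F t q| ≤ 2 * M2 := by
        calc |F t p + F t q| ≤ |F t p| + |F t q| := abs_add_le _ _
          _ ≤ 2 * M2 := by linarith
      calc Θb t * (|F t p - F t q| * |F t p + F t q|)
          ≤ CΘ * ((LF * dist p q) * (2 * M2)) :=
            mul_le_mul hΘub
              (mul_le_mul hF h2 (abs_nonneg _) (mul_nonneg hLF0.le hdnn))
              (mul_nonneg (abs_nonneg _) (abs_nonneg _)) hCΘ0
        _ = KV * dist p q := by rw [hKVdef]; ring
  -- Picard–Lindelöf existence
  set CV : ℝ := CΘ * M2 + CΘ * M2 ^ 2 with hCVdef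
  have hCV0 : 0 ≤ CV := by rw [hCVdef]; positivity
  clear_value CV
  set RR : ℝ := CV * T + 1 with hRRdef
  have hRR0 : 0 ≤ RR := by rw [hRRdef]; positivity
  clear_value RR
  have hVbd : ∀ t (p : ℝ × ℝ), ‖V t p‖ ≤ CV := by
    intro t p
    rw [hVdef]
    dsimp only
    rw [Prod.norm_def]
    have hFa := hFabs t p
    have hΘnn := hΘb_nn t
    have hΘub := hΘb_ub t
    have habs := abs_nonneg (F t p)
    apply max_le
    · rw [Real.norm_eq_abs, abs_neg, abs_mul, abs_of_nonneg hΘnn, hCVdef]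
      have h1 : Θb t * |F t p| ≤ CΘ * M2 := mul_le_mul hΘub hFa (abs_nonneg _) hCΘ0
      nlinarith [mul_nonneg hCΘ0 (sq_nonneg M2)]
    · rw [Real.norm_eq_abs, abs_neg, abs_mul, abs_of_nonneg hΘnn, abs_pow]
      rw [hCVdef]
      have h1 : Θb t * |F t p| ^ 2 ≤ CΘ * M2 ^ 2 :=
        mul_le_mul hΘub (by nlinarith [abs_nonneg (F t p)]) (sq_nonneg _) hCΘ0
      nlinarith [mul_nonneg hCΘ0 hM20.le]
  have hpl : IsPicardLindelof V (tmin := 0) (tmax := T) ⟨T, ⟨hT.le, le_rfl⟩⟩ ((0 : ℝ), (0 : ℝ))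
      RR.toNNReal 0 CV.toNNReal KV.toNNReal := by
    refine ⟨fun t _ => (hVlip t).lipschitzOnWith, ?_, ?_, ?_⟩
    · intro x _
      have hFcont : Continuous fun t => F t x := by
        rw [hFdef]
        have h1 : Continuous fun t => -(Rb t + cu x.1) - cv x.2 := by fun_prop
        fun_prop
      rw [hVdef]
      exact (Continuous.prodMk (((hΘbc.mul hFcont)).neg)
        ((hΘbc.mul (hFcont.pow 2)).neg)).continuousOn
    · exact fun t _ x _ => by rw [Real.coe_toNNReal _ hCV0]; exact hVbd t x
    · show (CV.toNNReal : ℝ) * max (T - T) (T - 0) ≤ (RR.toNNReal : ℝ) - ((0 : NNReal) : ℝ)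
      rw [Real.coe_toNNReal _ hCV0, Real.coe_toNNReal _ hRR0, NNReal.coe_zero, hRRdef]
      have : max (T - T) (T - 0) = T := by
        rw [sub_self, sub_zero, max_eq_right hT.le]
      rw [this]
      nlinarith
  obtain ⟨α, hα0', hαd⟩ := hpl.exists_eq_forall_mem_Icc_hasDerivWithinAt₀
  have hα0 : α T = ((0 : ℝ), (0 : ℝ)) := hα0'
  have hαc : ContinuousOn α (Icc 0 T) := fun t ht => (hαd t ht).continuousWithinAt
  set uu : ℝ → ℝ := fun t => (α t).1 with huudef
  set vv : ℝ → ℝ := fun t => (α t).2 with hvvdef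
  have huuc : ContinuousOn uu (Icc 0 T) := continuous_fst.comp_continuousOn hαc
  have hvvc : ContinuousOn vv (Icc 0 T) := continuous_snd.comp_continuousOn hαc
  set fc : ℝ → ℝ := fun t => F t (α t) with hfcdef
  have hfcc : ContinuousOn fc (Icc 0 T) := by
    rw [hfcdef]
    have h1 : ContinuousOn (fun t => -(Rb t + cu (uu t)) - cv (vv t)) (Icc 0 T) := by
      apply ContinuousOn.sub
      · exact (hRbc.continuousOn.add ((MVAux.cl_continuous _ _).comp_continuousOn huuc)).neg
      · exact (MVAux.cl_continuous _ _).comp_continuousOn hvvc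
    have h2 : ContinuousOn (fun t => cv (vv t)) (Icc 0 T) :=
      (MVAux.cl_continuous _ _).comp_continuousOn hvvc
    have : (fun t => F t (α t)) = fun t =>
        γ₀⁻¹ * Real.exp (-(Rb t + cu (uu t)) - cv (vv t)) + Real.exp (-(cv (vv t))) - 1 := by
      funext t; rw [hFdef, huudef, hvvdef]
    rw [this]
    exact ((continuousOn_const.mul (Real.continuous_exp.comp_continuousOn h1)).add
      (Real.continuous_exp.comp_continuousOn h2.neg)).sub continuousOn_const
  -- derivatives of the components
  have huud : ∀ t ∈ Icc 0 T, HasDerivWithinAt uu (-(Θb t * fc t)) (Icc 0 T) t := by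
    intro t ht
    have h1 := (ContinuousLinearMap.fst ℝ ℝ ℝ).hasFDerivAt.comp_hasDerivWithinAt t (hαd t ht)
    have h2 : (ContinuousLinearMap.fst ℝ ℝ ℝ) (V t (α t)) = -(Θb t * fc t) := by
      simp [hVdef, hfcdef]
    rw [huudef]
    rw [h2] at h1; exact h1
  have hvvd : ∀ t ∈ Icc 0 T, HasDerivWithinAt vv (-(Θb t * fc t ^ 2)) (Icc 0 T) t := by
    intro t ht
    have h1 := (ContinuousLinearMap.snd ℝ ℝ ℝ).hasFDerivAt.comp_hasDerivWithinAt t (hαd t ht)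
    have h2 : (ContinuousLinearMap.snd ℝ ℝ ℝ) (V t (α t)) = -(Θb t * fc t ^ 2) := by
      simp [hVdef, hfcdef]
    rw [hvvdef]
    rw [h2] at h1; exact h1
  -- FTC representations
  have huuT : uu T = 0 := by simp only [huudef]; simp [hα0]
  have hvvT : vv T = 0 := by simp only [hvvdef]; simp [hα0]
  have huu_int : ∀ t ∈ Icc 0 T, uu t = ∫ s in t..T, Θb s * fc s :=
    MVAux.eq_integral_of_hasDerivWithinAt hT (hΘbc.continuousOn.mul hfcc) huud huuT
  have hvv_int : ∀ t ∈ Icc 0 T, vv t = ∫ s in t..T, Θb s * fc s ^ 2 :=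
    MVAux.eq_integral_of_hasDerivWithinAt hT
      (hΘbc.continuousOn.mul (hfcc.pow 2)) hvvd hvvT
  -- a priori box bounds for integrals of Θb·h with -1 < h ≤ M on Icc
  have hIccsub : ∀ t ∈ Icc 0 T, Icc t T ⊆ Icc 0 T :=
    fun t ht => Icc_subset_Icc ht.1 le_rfl
  have hbox : ∀ h : ℝ → ℝ, ContinuousOn h (Icc 0 T) →
      (∀ s ∈ Icc 0 T, -1 ≤ h s) → (∀ s ∈ Icc 0 T, h s ≤ M) →
      ∀ t ∈ Icc 0 T, (-B ≤ ∫ s in t..T, Θb s * h s) ∧ (∫ s in t..T, Θb s * h s) ≤ A ∧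
        0 ≤ (∫ s in t..T, Θb s * h s ^ 2) ∧ (∫ s in t..T, Θb s * h s ^ 2) ≤ D := by
    intro h hc hlb hub t ht
    have hsub := hIccsub t ht
    have hint1 : IntervalIntegrable (fun s => Θb s * h s) volume t T :=
      ((hΘbc.continuousOn.mono hsub).mul (hc.mono hsub)).intervalIntegrable_of_Icc ht.2
    have hint2 : IntervalIntegrable (fun s => Θb s * h s ^ 2) volume t T :=
      ((hΘbc.continuousOn.mono hsub).mul ((hc.mono hsub).pow 2)).intervalIntegrable_of_Icc ht.2
    have hhub : ∀ s ∈ Icc t T, Θb s * h s ≤ CΘ * M2 := by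
      intro s hs
      have h1 := hΘb_nn s
      have h2 := hΘb_ub s
      have h3 := (hub s (hsub hs)).trans hM2M
      nlinarith
    have hhlb : ∀ s ∈ Icc t T, -CΘ ≤ Θb s * h s := by
      intro s hs
      have h1 := hΘb_nn s
      have h2 := hΘb_ub s
      have h3 := hlb s (hsub hs)
      nlinarith
    have hsqub : ∀ s ∈ Icc t T, Θb s * h s ^ 2 ≤ CΘ * M2 ^ 2 := by
      intro s hs
      have h1 := hΘb_nn s
      have h2 := hΘb_ub s
      have h3 := (hub s (hsub hs)).trans hM2M
      have h4 := hlb s (hsub hs)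
      have hsq : h s ^ 2 ≤ M2 ^ 2 := sq_le_sq' (by linarith) h3
      exact mul_le_mul h2 hsq (sq_nonneg _) hCΘ0
    have hI1ub : (∫ s in t..T, Θb s * h s) ≤ CΘ * M2 * (T - t) := by
      have h0 := intervalIntegral.integral_mono_on ht.2 hint1
        (intervalIntegrable_const (c := CΘ * M2)) hhub
      rw [intervalIntegral.integral_const, smul_eq_mul] at h0
      linarith
    have hI1lb : -CΘ * (T - t) ≤ (∫ s in t..T, Θb s * h s) := by
      have h0 := intervalIntegral.integral_mono_on ht.2
        (intervalIntegrable_const (c := -CΘ)) hint1 hhlb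
      rw [intervalIntegral.integral_const, smul_eq_mul] at h0
      nlinarith
    have hI2ub : (∫ s in t..T, Θb s * h s ^ 2) ≤ CΘ * M2 ^ 2 * (T - t) := by
      have h0 := intervalIntegral.integral_mono_on ht.2 hint2
        (intervalIntegrable_const (c := CΘ * M2 ^ 2)) hsqub
      rw [intervalIntegral.integral_const, smul_eq_mul] at h0
      nlinarith
    have hI2lb : 0 ≤ (∫ s in t..T, Θb s * h s ^ 2) :=
      intervalIntegral.integral_nonneg ht.2
        (fun s hs => mul_nonneg (hΘb_nn s) (sq_nonneg _))
    have ht0 := ht.1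
    have htT := ht.2
    refine ⟨?_, ?_, hI2lb, ?_⟩
    · rw [hBdef]; nlinarith
    · rw [hAdef]; nlinarith [mul_nonneg (mul_nonneg hCΘ0 hM20.le) ht0]
    · rw [hDdef]; nlinarith [mul_nonneg (mul_nonneg hCΘ0 (sq_nonneg M2)) ht0]
  -- the box bounds hold along the constructed solution
  have hfc_lb : ∀ s ∈ Icc 0 T, (-1 : ℝ) ≤ fc s := fun s _ => (hFlb s (α s)).le
  have hfc_ub : ∀ s ∈ Icc 0 T, fc s ≤ M := fun s _ => hFub s (α s)
  have hbounds := hbox fc hfcc hfc_lb hfc_ub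
  have hcu_uu : ∀ t ∈ Icc 0 T, cu (uu t) = uu t := by
    intro t ht
    obtain ⟨h1, h2, _, _⟩ := hbounds t ht
    rw [← huu_int t ht] at h1 h2
    rw [hcudef]
    exact MVAux.cl_eq (by linarith) h2
  have hcv_vv : ∀ t ∈ Icc 0 T, cv (vv t) = vv t := by
    intro t ht
    obtain ⟨_, _, h1, h2⟩ := hbounds t ht
    rw [← hvv_int t ht] at h1 h2
    rw [hcvdef]
    exact MVAux.cl_eq h1 h2
  -- the candidate solution
  set f : ℝ → ℝ := fun t =>
    γ₀⁻¹ * Real.exp (-(Rb t + uu t) - vv t) + Real.exp (-(vv t)) - 1 with hfdef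
  have hffc : ∀ t ∈ Icc 0 T, f t = fc t := by
    intro t ht
    have h1 : fc t = γ₀⁻¹ * Real.exp (-(Rb t + cu (uu t)) - cv (vv t))
        + Real.exp (-(cv (vv t))) - 1 := by
      simp only [hfcdef, hFdef, huudef, hvvdef]
    rw [hfdef, h1, hcu_uu t ht, hcv_vv t ht]
  -- smoothness
  have hexpC1 : ContDiff ℝ 1 Real.exp := Real.contDiff_exp.of_le le_top
  have hRbd : ∀ t ∈ Icc 0 T, HasDerivWithinAt Rb (-rb t) (Icc 0 T) t := by
    intro t ht
    refine ((MVAux.hasDerivAt_integral_left hrbc T t).hasDerivWithinAt).congr ?_ ?_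
    · intro y hy; simp only [hRbdef]; rw [hπeq y hy]
    · simp only [hRbdef]; rw [hπeq t ht]
  have hRbC1 : ContDiffOn ℝ 1 Rb (Icc 0 T) :=
    MVAux.contDiffOn_of_hasDerivWithinAt hT hRbd hrbc.continuousOn.neg
  have huuC1 : ContDiffOn ℝ 1 uu (Icc 0 T) :=
    MVAux.contDiffOn_of_hasDerivWithinAt hT huud (hΘbc.continuousOn.mul hfcc).neg
  have hvvC1 : ContDiffOn ℝ 1 vv (Icc 0 T) :=
    MVAux.contDiffOn_of_hasDerivWithinAt hT hvvd (hΘbc.continuousOn.mul (hfcc.pow 2)).neg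
  have hfC1 : ContDiffOn ℝ 1 f (Icc 0 T) := by
    rw [hfdef]
    have h1 : ContDiffOn ℝ 1 (fun t => -(Rb t + uu t) - vv t) (Icc 0 T) :=
      ((hRbC1.add huuC1).neg).sub hvvC1
    have h2 : ContDiffOn ℝ 1 (fun t => -(vv t)) (Icc 0 T) := hvvC1.neg
    exact ((contDiffOn_const.mul (hexpC1.comp_contDiffOn h1)).add
      (hexpC1.comp_contDiffOn h2)).sub contDiffOn_const
  have hfcont : ContinuousOn f (Icc 0 T) := hfC1.continuousOn
  -- splitting the integrals in H1b and H2b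
  have hRint : ∀ t ∈ Icc 0 T, (∫ s in t..T, r s) = Rb t := by
    intro t ht
    have h1 : EqOn r rb (uIcc t T) := by
      intro s hs
      rw [uIcc_of_le ht.2] at hs
      exact (hrb_eq s (hIccsub t ht hs)).symm
    rw [intervalIntegral.integral_congr h1]
    simp only [hRbdef]
    rw [hπeq t ht]
  have hint_cont : ∀ g : ℝ → ℝ, ContinuousOn g (Icc 0 T) → ∀ t ∈ Icc 0 T,
      IntervalIntegrable g volume t T :=
    fun g hg t ht => (hg.mono (hIccsub t ht)).intervalIntegrable_of_Icc ht.2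
  have hH1g : ∀ g : ℝ → ℝ, ContinuousOn g (Icc 0 T) → ∀ t ∈ Icc 0 T,
      H1b T r Θ g t = Real.exp (Rb t + ∫ s in t..T, Θ s * g s) := by
    intro g hg t ht
    rw [H1b]
    congr 1
    rw [← hRint t ht]
    exact intervalIntegral.integral_add (hint_cont r hrc t ht)
      (hint_cont (fun s => Θ s * g s) (hΘc.mul hg) t ht)
  have hH2g : ∀ g : ℝ → ℝ, ContinuousOn g (Icc 0 T) → ∀ t ∈ Icc 0 T,
      H2b T r Θ g t = Real.exp (2 * (Rb t + ∫ s in t..T, Θ s * g s)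
        + ∫ s in t..T, Θ s * g s ^ 2) := by
    intro g hg t ht
    rw [H2b]
    congr 1
    have i1 := hint_cont (fun s => 2 * r s) (continuousOn_const.mul hrc) t ht
    have i2 := hint_cont (fun s => 2 * (Θ s * g s)) (continuousOn_const.mul (hΘc.mul hg)) t ht
    have i3 := hint_cont (fun s => Θ s * g s ^ 2) (hΘc.mul (hg.pow 2)) t ht
    have i12 : IntervalIntegrable (fun s => 2 * r s + 2 * (Θ s * g s)) volume t T := i1.add i2
    calc (∫ s in t..T, 2 * r s + 2 * Θ s * g s + Θ s * g s ^ 2)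
        = (∫ s in t..T, 2 * r s + 2 * (Θ s * g s) + Θ s * g s ^ 2) := by
          apply intervalIntegral.integral_congr; intro s _; dsimp only; ring
      _ = (∫ s in t..T, 2 * r s + 2 * (Θ s * g s)) + (∫ s in t..T, Θ s * g s ^ 2) :=
          intervalIntegral.integral_add i12 i3
      _ = ((∫ s in t..T, 2 * r s) + (∫ s in t..T, 2 * (Θ s * g s)))
            + (∫ s in t..T, Θ s * g s ^ 2) := by
          rw [intervalIntegral.integral_add i1 i2]
      _ = (2 * (∫ s in t..T, r s) + 2 * (∫ s in t..T, Θ s * g s))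
            + (∫ s in t..T, Θ s * g s ^ 2) := by
          rw [intervalIntegral.integral_const_mul, intervalIntegral.integral_const_mul]
      _ = 2 * (Rb t + ∫ s in t..T, Θ s * g s) + (∫ s in t..T, Θ s * g s ^ 2) := by
          rw [hRint t ht]; ring
  -- the integral identities for f
  have hu_eq : ∀ t ∈ Icc 0 T, (∫ s in t..T, Θ s * f s) = uu t := by
    intro t ht
    rw [huu_int t ht]
    apply intervalIntegral.integral_congr
    intro s hs
    rw [uIcc_of_le ht.2] at hs
    have hs' := hIccsub t ht hs
    dsimp only
    rw [hΘb_eq s hs', hffc s hs']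
  have hv_eq : ∀ t ∈ Icc 0 T, (∫ s in t..T, Θ s * f s ^ 2) = vv t := by
    intro t ht
    rw [hvv_int t ht]
    apply intervalIntegral.integral_congr
    intro s hs
    rw [uIcc_of_le ht.2] at hs
    have hs' := hIccsub t ht hs
    dsimp only
    rw [hΘb_eq s hs', hffc s hs']
  have hfeqn : ∀ t ∈ Icc 0 T,
      f t * (γ₀ * H2b T r Θ f t) =
        H1b T r Θ f t + γ₀ * (H1b T r Θ f t ^ 2 - H2b T r Θ f t) := by
    intro t ht
    rw [hH1g f hfcont t ht, hH2g f hfcont t ht, hu_eq t ht, hv_eq t ht]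
    have hft : f t = γ₀⁻¹ * Real.exp (-(Rb t + uu t) - vv t) + Real.exp (-(vv t)) - 1 := by
      simp only [hfdef]
    rw [hft]
    exact MVAux.key_algebra γ₀ (Rb t + uu t) (vv t) (ne_of_gt hγ)
  -- continuity of primitives
  have hprim : ∀ h : ℝ → ℝ, Continuous h → Continuous fun t => ∫ s in t..T, h s := by
    intro h hh
    have h1 : Continuous fun a => ∫ s in T..a, h s :=
      intervalIntegral.continuous_primitive (fun a b => hh.intervalIntegrable a b) T
    have h2 : (fun t => ∫ s in t..T, h s) = fun t => -∫ s in T..t, h s := by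
      funext t; exact intervalIntegral.integral_symm T t
    rw [h2]; exact h1.neg
  refine ⟨f, ⟨hfC1, hfeqn⟩, fun t _ => mul_pos hγ (by rw [H2b]; exact Real.exp_pos _), ?_⟩
  rintro g ⟨hgC1, hgeq⟩
  have hgcont : ContinuousOn g (Icc 0 T) := hgC1.continuousOn
  set gc : ℝ → ℝ := fun s => g (π s) with hgcdef
  have hgcc : Continuous gc := hgcont.comp_continuous hπc hπmem
  have hgc_eq : ∀ s ∈ Icc 0 T, gc s = g s := fun s hs => by
    simp only [hgcdef]; rw [hπeq s hs]
  set ug : ℝ → ℝ := fun t => ∫ s in t..T, Θb s * gc s with hugdef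
  set vg : ℝ → ℝ := fun t => ∫ s in t..T, Θb s * gc s ^ 2 with hvgdef
  have hugd : ∀ t, HasDerivAt ug (-(Θb t * gc t)) t := by
    intro t
    have := MVAux.hasDerivAt_integral_left (hΘbc.mul hgcc) T t
    simpa [hugdef] using this
  have hvgd : ∀ t, HasDerivAt vg (-(Θb t * gc t ^ 2)) t := by
    intro t
    have := MVAux.hasDerivAt_integral_left (hΘbc.mul (hgcc.pow 2)) T t
    simpa [hvgdef] using this
  have hug_eq : ∀ t ∈ Icc 0 T, ug t = ∫ s in t..T, Θ s * g s := by
    intro t ht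
    simp only [hugdef]
    apply intervalIntegral.integral_congr
    intro s hs
    rw [uIcc_of_le ht.2] at hs
    have hs' := hIccsub t ht hs
    dsimp only
    rw [hΘb_eq s hs', hgc_eq s hs']
  have hvg_eq : ∀ t ∈ Icc 0 T, vg t = ∫ s in t..T, Θ s * g s ^ 2 := by
    intro t ht
    simp only [hvgdef]
    apply intervalIntegral.integral_congr
    intro s hs
    rw [uIcc_of_le ht.2] at hs
    have hs' := hIccsub t ht hs
    dsimp only
    rw [hΘb_eq s hs', hgc_eq s hs']
  -- the algebraic formula for g
  have hkey : ∀ t ∈ Icc 0 T,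
      g t = γ₀⁻¹ * Real.exp (-(Rb t + ug t) - vg t) + Real.exp (-(vg t)) - 1 := by
    intro t ht
    have heq := hgeq t ht
    rw [hH1g g hgcont t ht, hH2g g hgcont t ht, ← hug_eq t ht, ← hvg_eq t ht] at heq
    have hne : γ₀ * Real.exp (2 * (Rb t + ug t) + vg t) ≠ 0 :=
      (mul_pos hγ (Real.exp_pos _)).ne'
    have halg := MVAux.key_algebra γ₀ (Rb t + ug t) (vg t) (ne_of_gt hγ)
    exact mul_right_cancel₀ hne (heq.trans halg.symm)
  -- bounds for g
  have hg_lb : ∀ s ∈ Icc 0 T, (-1 : ℝ) ≤ g s := by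
    intro s hs
    rw [hkey s hs]
    have h1 := Real.exp_pos (-(Rb s + ug s) - vg s)
    have h2 := Real.exp_pos (-(vg s))
    have h3 : (0:ℝ) < γ₀⁻¹ := by positivity
    nlinarith
  have hvg_nn : ∀ t ∈ Icc 0 T, 0 ≤ vg t := by
    intro t ht
    simp only [hvgdef]
    exact intervalIntegral.integral_nonneg ht.2 (fun s _ => mul_nonneg (hΘb_nn s) (sq_nonneg _))
  have hug_lb : ∀ t ∈ Icc 0 T, -B ≤ ug t := by
    intro t ht
    have hint1 : IntervalIntegrable (fun s => Θb s * gc s) volume t T :=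
      (hΘbc.mul hgcc).intervalIntegrable t T
    have hhlb : ∀ s ∈ Icc t T, -CΘ ≤ Θb s * gc s := by
      intro s hs
      have h1 := hΘb_nn s
      have h2 := hΘb_ub s
      have h4 : (-1:ℝ) ≤ gc s := by
        simp only [hgcdef]; exact hg_lb (π s) (hπmem s)
      nlinarith
    have h0 := intervalIntegral.integral_mono_on ht.2
      (intervalIntegrable_const (c := -CΘ)) hint1 hhlb
    rw [intervalIntegral.integral_const, smul_eq_mul] at h0
    simp only [hugdef]
    rw [hBdef]
    nlinarith [ht.1, ht.2]
  have hg_ub : ∀ t ∈ Icc 0 T, g t ≤ M := by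
    intro t ht
    rw [hkey t ht, hMdef]
    have hexp : -(Rb t + ug t) - vg t ≤ Cr * T + B := by
      have e1 := hRb_lb t
      have e2 := hug_lb t ht
      have e3 := hvg_nn t ht
      linarith
    have h1 := Real.exp_le_exp.2 hexp
    have h2 : Real.exp (-(vg t)) ≤ 1 :=
      Real.exp_le_one_iff.2 (by linarith [hvg_nn t ht])
    have h3 : (0:ℝ) < γ₀⁻¹ := by positivity
    nlinarith
  have hgbox := hbox gc hgcc.continuousOn
    (fun s hs => by rw [hgc_eq s hs]; exact hg_lb s hs)
    (fun s hs => by rw [hgc_eq s hs]; exact hg_ub s hs)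
  have hcu_ug : ∀ t ∈ Icc 0 T, cu (ug t) = ug t := by
    intro t ht
    obtain ⟨h1, h2, _, _⟩ := hgbox t ht
    have hugt : ug t = ∫ s in t..T, Θb s * gc s := by simp only [hugdef]
    rw [← hugt] at h1 h2
    rw [hcudef]
    exact MVAux.cl_eq (by linarith) h2
  have hcv_vg : ∀ t ∈ Icc 0 T, cv (vg t) = vg t := by
    intro t ht
    obtain ⟨_, _, h1, h2⟩ := hgbox t ht
    have hvgt : vg t = ∫ s in t..T, Θb s * gc s ^ 2 := by simp only [hvgdef]
    rw [← hvgt] at h1 h2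
    rw [hcvdef]
    exact MVAux.cl_eq h1 h2
  -- βg solves the same ODE
  set βg : ℝ → ℝ × ℝ := fun t => (ug t, vg t) with hβgdef
  have hβgc : Continuous βg := by
    have hugc : Continuous ug := by
      simp only [hugdef]; exact hprim _ (hΘbc.mul hgcc)
    have hvgc : Continuous vg := by
      simp only [hvgdef]; exact hprim _ (hΘbc.mul (hgcc.pow 2))
    rw [hβgdef]; exact hugc.prodMk hvgc
  have hβgd : ∀ t ∈ Icc 0 T, HasDerivAt βg (V t (βg t)) t := by
    intro t ht
    have h1 : HasDerivAt βg (-(Θb t * gc t), -(Θb t * gc t ^ 2)) t := by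
      rw [hβgdef]; exact (hugd t).prodMk (hvgd t)
    have hF : F t (βg t) = gc t := by
      have h3 : F t (βg t) = γ₀⁻¹ * Real.exp (-(Rb t + cu (ug t)) - cv (vg t))
          + Real.exp (-(cv (vg t))) - 1 := by simp only [hFdef, hβgdef]
      rw [h3, hcu_ug t ht, hcv_vg t ht, hgc_eq t ht]
      exact (hkey t ht).symm
    have h2 : V t (βg t) = (-(Θb t * gc t), -(Θb t * gc t ^ 2)) := by
      rw [hVdef]
      dsimp only
      rw [hF]
    rw [h2]
    exact h1
  have hαβ : EqOn α βg (Icc 0 T) := by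
    apply ODE_solution_unique_of_mem_Icc_left
      (fun t _ => (hVlip t).lipschitzOnWith (s := univ)) hαc ?_ (fun t _ => mem_univ _)
      hβgc.continuousOn ?_ (fun t _ => mem_univ _) ?_
    · intro t ht
      have hmem : Icc 0 T ∈ nhdsWithin t (Iic t) :=
        mem_nhdsWithin.mpr ⟨Ioi 0, isOpen_Ioi, ht.1,
          fun x hx => ⟨le_of_lt hx.1, le_trans hx.2 ht.2⟩⟩
      exact (hαd t (Ioc_subset_Icc_self ht)).mono_of_mem_nhdsWithin hmem
    · exact fun t ht => (hβgd t (Ioc_subset_Icc_self ht)).hasDerivWithinAt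
    · have h1 : ug T = 0 := by
        simp only [hugdef]; exact intervalIntegral.integral_same
      have h2 : vg T = 0 := by
        simp only [hvgdef]; exact intervalIntegral.integral_same
      have h3 : βg T = ((0:ℝ), (0:ℝ)) := by
        rw [hβgdef]; dsimp only; rw [h1, h2]
      rw [hα0, h3]
  intro t ht
  have h1 : α t = βg t := hαβ ht
  have h2 : uu t = ug t := by
    simp only [huudef]
    rw [h1, hβgdef]
  have h3 : vv t = vg t := by
    simp only [hvvdef]
    rw [h1, hβgdef]
  calc f t = γ₀⁻¹ * Real.exp (-(Rb t + ug t) - vg t) + Real.exp (-(vg t)) - 1 := by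
        simp only [hfdef]; rw [h2, h3]
    _ = g t := (hkey t ht).symm
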